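/- For every real A > 0 there exists a real C > 0 with the following property. Let D ≥ 2 be an integer and let L be a real number with L ≥ C·(log D)². If | Σ_{ℓ ≤ L, ℓ an odd prime} (1 − ℓ/L)·(D/ℓ)·log ℓ | ≤ A·L^{1/2}·log D, where (D/ℓ) denotes the Legendre symbol, then the number of odd primes ℓ ≤ L for which (D/ℓ) = 1 (that is, for which D is a nonzero quadratic residue modulo ℓ) is at least L/(5·log L). -/

import Mathlib

open scoped Classical

noncomputable section

namespace MQRP
open Finset Real ArithmeticFunction

def T (N : ℕ) : ℝ := ∑ n ∈ Finset.Icc 1 N, Real.log n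
def psi (N : ℕ) : ℝ := ∑ n ∈ Finset.Icc 1 N, Λ n
def theta (N : ℕ) : ℝ := ∑ p ∈ (Finset.range (N+1)).filter Nat.Prime, Real.log p
def A0 : ℝ := 7/15 * Real.log 2 + 3/10 * Real.log 3 + 1/6 * Real.log 5
def Err (x : ℝ) : ℝ := 10 * (Real.log x + 1) + 2 * Real.sqrt x * (Real.log x)^2 + 40

lemma T_zero : T 0 = 0 := by simp [T]

lemma T_ge (N : ℕ) (hN : 1 ≤ N) : (N : ℝ) * Real.log N - N + 1 ≤ T N := by
  induction N with
  | zero => omega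
  | succ n ih =>
    rcases Nat.eq_or_lt_of_le hN with h | h
    · simp [T, ← h]
    · have hn : 1 ≤ n := by omega
      have ihn := ih hn
      have hstep : T (n+1) = T n + Real.log (n+1) := by
        rw [T, T, Finset.sum_Icc_succ_top (by omega)]; push_cast; ring
      have hlog : (n:ℝ) * Real.log ((n:ℝ)+1) - (n:ℝ) * Real.log n ≤ 1 := by
        rw [← mul_sub, ← Real.log_div (by positivity) (by positivity)]
        have h1 : Real.log (((n:ℝ)+1)/n) ≤ ((n:ℝ)+1)/n - 1 :=
          Real.log_le_sub_one_of_pos (by positivity)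
        have h2 : ((n:ℝ)+1)/n - 1 = 1/n := by field_simp; ring
        rw [h2] at h1
        calc (n:ℝ) * Real.log (((n:ℝ)+1)/(n:ℝ)) ≤ (n:ℝ) * (1/n) := by
              exact mul_le_mul_of_nonneg_left h1 (by positivity)
          _ = 1 := by field_simp
      push_cast
      rw [hstep]
      push_cast at ihn
      nlinarith [ihn]


lemma T_le (N : ℕ) (hN : 1 ≤ N) : T N ≤ (N : ℝ) * Real.log N - N + 1 + Real.log N := by
  induction N with
  | zero => omega
  | succ n ih =>
    rcases Nat.eq_or_lt_of_le hN with h | h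
    · rw [T, ← h]; simp
    · have hn : 1 ≤ n := by omega
      have ihn := ih hn
      have hstep : T (n+1) = T n + Real.log (n+1) := by
        rw [T, T, Finset.sum_Icc_succ_top (by omega)]; push_cast; ring
      -- key: 1 ≤ (n+1) * (log (n+1) - log n)
      have key : (1:ℝ) ≤ ((n:ℝ)+1) * (Real.log ((n:ℝ)+1) - Real.log n) := by
        rw [← Real.log_div (by positivity) (by positivity)]
        have h1 : Real.log ((n:ℝ)/((n:ℝ)+1)) ≤ (n:ℝ)/((n:ℝ)+1) - 1 :=
          Real.log_le_sub_one_of_pos (by positivity)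
        have h2 : Real.log ((n:ℝ)/((n:ℝ)+1)) = - Real.log (((n:ℝ)+1)/(n:ℝ)) := by
          rw [← Real.log_inv]; congr 1; field_simp
        have h3 : (n:ℝ)/((n:ℝ)+1) - 1 = -(1/((n:ℝ)+1)) := by field_simp; ring
        rw [h2, h3] at h1
        have h4 : (1/((n:ℝ)+1)) ≤ Real.log (((n:ℝ)+1)/(n:ℝ)) := by linarith
        calc (1:ℝ) = ((n:ℝ)+1) * (1/((n:ℝ)+1)) := by field_simp
          _ ≤ ((n:ℝ)+1) * Real.log (((n:ℝ)+1)/(n:ℝ)) :=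
              mul_le_mul_of_nonneg_left h4 (by positivity)
      rw [hstep]
      push_cast
      nlinarith [ihn]


lemma T_eq (N : ℕ) : T N = ∑ d ∈ Finset.Icc 1 N, Λ d * ((N / d : ℕ) : ℝ) := by
  have h1 : T N = ∑ n ∈ Finset.Icc 1 N, ∑ d ∈ n.divisors, Λ d := by
    rw [T]; exact Finset.sum_congr rfl fun n _ => (vonMangoldt_sum).symm
  have h2 : ∀ n ∈ Finset.Icc 1 N, ∑ d ∈ n.divisors, Λ d
      = ∑ d ∈ (Finset.Icc 1 N).filter (· ∣ n), Λ d := by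
    intro n hn
    simp only [Finset.mem_Icc] at hn
    congr 1
    ext d
    simp only [Nat.mem_divisors, Finset.mem_filter, Finset.mem_Icc]
    constructor
    · rintro ⟨hd, -⟩
      exact ⟨⟨Nat.one_le_iff_ne_zero.2 (by rintro rfl; simp at hd; omega),
        le_trans (Nat.le_of_dvd (by omega) hd) hn.2⟩, hd⟩
    · rintro ⟨-, hd⟩; exact ⟨hd, by omega⟩
  rw [h1, Finset.sum_congr rfl h2]
  rw [Finset.sum_comm' (s := Finset.Icc 1 N) (t := fun n => (Finset.Icc 1 N).filter (· ∣ n))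
    (t' := Finset.Icc 1 N) (s' := fun d => (Finset.Icc 1 N).filter (d ∣ ·)) ?_]
  · refine Finset.sum_congr rfl fun d _ => ?_
    rw [Finset.sum_const, nsmul_eq_mul, mul_comm]
    congr 2
    have : Finset.Icc 1 N = Finset.Ioc 0 N := by ext; simp; omega
    rw [this, Nat.Ioc_filter_dvd_card_eq_div]
  · intro d n
    simp only [Finset.mem_filter]
    tauto


lemma e_le_one (n : ℕ) : (n : ℤ) + (n/30 : ℕ) ≤ 1 + (n/2 : ℕ) + (n/3 : ℕ) + (n/5 : ℕ) := by
  omega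


lemma comb_le_psi (N : ℕ) :
    T N - T (N/2) - T (N/3) - T (N/5) + T (N/30) ≤ psi N := by
  have key : ∀ k : ℕ, 0 < k →
      T (N/k) = ∑ d ∈ Finset.Icc 1 N, Λ d * ((N / (k*d) : ℕ) : ℝ) := by
    intro k hk
    rw [T_eq]
    rw [← Finset.sum_subset (Finset.Icc_subset_Icc_right (Nat.div_le_self N k))]
    · refine Finset.sum_congr rfl fun d hd => ?_
      rw [Nat.div_div_eq_div_mul, mul_comm k d, ← Nat.div_div_eq_div_mul]
    · intro d hd hnd
      simp only [Finset.mem_Icc] at hd hnd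
      have h0 : N / (k*d) = 0 := by
        rw [← Nat.div_div_eq_div_mul]; exact Nat.div_eq_of_lt (by omega)
      rw [h0]; simp
  have h1 : T N = ∑ d ∈ Finset.Icc 1 N, Λ d * ((N / d : ℕ) : ℝ) := by
    simpa using key 1 one_pos
  rw [h1, key 2 (by norm_num), key 3 (by norm_num), key 5 (by norm_num),
    key 30 (by norm_num)]
  rw [← Finset.sum_sub_distrib, ← Finset.sum_sub_distrib, ← Finset.sum_sub_distrib,
    ← Finset.sum_add_distrib]
  rw [psi]
  refine Finset.sum_le_sum fun d hd => ?_
  have hΛ : 0 ≤ Λ d := vonMangoldt_nonneg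
  have he : ((N/d : ℕ) : ℝ) - (N/(2*d) : ℕ) - (N/(3*d) : ℕ) - (N/(5*d) : ℕ)
      + (N/(30*d) : ℕ) ≤ 1 := by
    have := e_le_one (N/d)
    have e2 : N / d / 2 = N / (2*d) := by rw [Nat.div_div_eq_div_mul, mul_comm]
    have e3 : N / d / 3 = N / (3*d) := by rw [Nat.div_div_eq_div_mul, mul_comm]
    have e5 : N / d / 5 = N / (5*d) := by rw [Nat.div_div_eq_div_mul, mul_comm]
    have e30 : N / d / 30 = N / (30*d) := by rw [Nat.div_div_eq_div_mul, mul_comm]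
    rw [e2, e3, e5, e30] at this
    have h' : ((N/d : ℕ) : ℝ) + ((N/(30*d) : ℕ) : ℝ)
        ≤ 1 + ((N/(2*d):ℕ) : ℝ) + ((N/(3*d):ℕ) : ℝ) + ((N/(5*d):ℕ) : ℝ) := by
      exact_mod_cast this
    linarith
  calc Λ d * ((N/d : ℕ) : ℝ) - Λ d * (N/(2*d) : ℕ) - Λ d * (N/(3*d) : ℕ)
        - Λ d * (N/(5*d) : ℕ) + Λ d * (N/(30*d) : ℕ)
      = Λ d * (((N/d : ℕ) : ℝ) - (N/(2*d) : ℕ) - (N/(3*d) : ℕ) - (N/(5*d) : ℕ)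
        + (N/(30*d) : ℕ)) := by ring
    _ ≤ Λ d * 1 := mul_le_mul_of_nonneg_left he hΛ
    _ = Λ d := mul_one _


-- helper: for 1 ≤ m ≤ y : y log y − m log m ∈ [0, (y−m)(log y + 1)]
lemma mul_log_helper {m y : ℝ} (hm : 1 ≤ m) (hmy : m ≤ y) :
    m * Real.log m ≤ y * Real.log y ∧
    y * Real.log y - m * Real.log m ≤ (y - m) * (Real.log y + 1) := by
  have hy : (1:ℝ) ≤ y := le_trans hm hmy
  have hly : 0 ≤ Real.log y := Real.log_nonneg hy
  have hlm : 0 ≤ Real.log m := Real.log_nonneg hm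
  have hmono : Real.log m ≤ Real.log y := Real.log_le_log (by linarith) hmy
  constructor
  · nlinarith
  · have h1 : Real.log y - Real.log m = Real.log (y/m) := (Real.log_div (by linarith) (by linarith)).symm
    have h2 : Real.log (y/m) ≤ y/m - 1 := Real.log_le_sub_one_of_pos (by positivity)
    have h3 : m * (Real.log y - Real.log m) ≤ y - m := by
      rw [h1]
      calc m * Real.log (y/m) ≤ m * (y/m - 1) := by
            exact mul_le_mul_of_nonneg_left h2 (by linarith)
        _ = y - m := by field_simp
    nlinarith

lemma psi_lower (N : ℕ) (hN : 30 ≤ N) :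
    A0 * N - 10 * (Real.log N + 1) ≤ psi N := by
  have hx30 : (30:ℝ) ≤ (N:ℝ) := by exact_mod_cast hN
  have hxpos : (0:ℝ) < (N:ℝ) := by linarith
  have hlogx : 0 ≤ Real.log (N:ℝ) := Real.log_nonneg (by linarith)
  have floorfacts : ∀ k : ℕ, 0 < k → k ≤ 30 →
      1 ≤ ((N/k : ℕ) : ℝ) ∧ ((N/k : ℕ) : ℝ) ≤ (N:ℝ) / k ∧ (N:ℝ) / k - 1 ≤ ((N/k : ℕ) : ℝ) := by
    intro k hk hk30
    have hk' : (0:ℝ) < (k:ℝ) := by exact_mod_cast hk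
    have h1 : 1 ≤ N / k := Nat.one_le_div_iff hk |>.2 (by omega)
    have h2 : ((N/k : ℕ) : ℝ) ≤ (N:ℝ) / k := by
      rw [le_div_iff₀ hk']
      exact_mod_cast Nat.div_mul_le_self N k
    have h3 : (N:ℝ) / k - 1 ≤ ((N/k : ℕ) : ℝ) := by
      have hlt : N < k * (N/k) + k := by
        have h := Nat.div_add_mod N k
        have := Nat.mod_lt N hk
        omega
      have hlt' : (N:ℝ) < (k:ℝ) * ((N/k:ℕ):ℝ) + k := by exact_mod_cast hlt
      rw [sub_le_iff_le_add, div_le_iff₀ hk']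
      nlinarith
    exact ⟨by exact_mod_cast h1, h2, h3⟩
  have UB : ∀ k : ℕ, 2 ≤ k → k ≤ 5 →
      T (N/k) ≤ ((N:ℝ)/k) * (Real.log (N:ℝ) - Real.log k) - ((N:ℝ)/k - 1) + 1 + Real.log (N:ℝ) := by
    intro k hk2 hk5
    obtain ⟨hm1, hmy, hym⟩ := floorfacts k (by omega) (by omega)
    have hkpos : (0:ℝ) < (k:ℝ) := by positivity
    have hk1 : (1:ℝ) ≤ (k:ℝ) := by exact_mod_cast (by omega : 1 ≤ k)
    have hlk : Real.log ((N:ℝ)/k) = Real.log (N:ℝ) - Real.log k :=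
      Real.log_div (by positivity) (by positivity)
    have hTle := T_le (N/k) ((Nat.one_le_div_iff (show 0 < k by omega)).2 (by omega))
    have hmono := (mul_log_helper hm1 hmy).1
    have hdivle : (N:ℝ)/k ≤ (N:ℝ) := div_le_self (le_of_lt hxpos) hk1
    have hlogm : Real.log ((N/k:ℕ):ℝ) ≤ Real.log (N:ℝ) :=
      Real.log_le_log (by linarith) (by linarith)
    calc T (N/k) ≤ ((N/k:ℕ):ℝ) * Real.log ((N/k:ℕ):ℝ) - ((N/k:ℕ):ℝ) + 1 + Real.log ((N/k:ℕ):ℝ) := hTle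
      _ ≤ ((N:ℝ)/k) * Real.log ((N:ℝ)/k) - ((N:ℝ)/k - 1) + 1 + Real.log (N:ℝ) := by
          nlinarith [hmono]
      _ = ((N:ℝ)/k) * (Real.log (N:ℝ) - Real.log k) - ((N:ℝ)/k - 1) + 1 + Real.log (N:ℝ) := by
          rw [hlk]
  have LB30 : ((N:ℝ)/30) * (Real.log (N:ℝ) - Real.log 30) - (Real.log (N:ℝ) + 1) - (N:ℝ)/30 + 1
      ≤ T (N/30) := by
    obtain ⟨hm1, hmy, hym⟩ := floorfacts 30 (by omega) le_rfl
    have hlk : Real.log ((N:ℝ)/30) = Real.log (N:ℝ) - Real.log 30 := by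
      rw [Real.log_div (by positivity) (by norm_num)]
    have hTge := T_ge (N/30) ((Nat.one_le_div_iff (show 0 < 30 by norm_num)).2 (by omega))
    obtain ⟨-, hdiff⟩ := mul_log_helper hm1 hmy
    have hdivle : (N:ℝ)/30 ≤ (N:ℝ) := div_le_self (le_of_lt hxpos) (by norm_num)
    have hly : Real.log ((N:ℝ)/30) ≤ Real.log (N:ℝ) :=
      Real.log_le_log (by positivity) hdivle
    have hlypos : 0 ≤ Real.log ((N:ℝ)/30) := Real.log_nonneg (by
      rw [le_div_iff₀ (by norm_num : (0:ℝ) < 30)]; linarith)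
    have h1 : ((N:ℝ)/30) * Real.log ((N:ℝ)/30) - (Real.log (N:ℝ) + 1)
        ≤ ((N/30:ℕ):ℝ) * Real.log ((N/30:ℕ):ℝ) := by
      have h2 : ((N:ℝ)/30 - ((N/30:ℕ):ℝ)) * (Real.log ((N:ℝ)/30) + 1)
          ≤ 1 * (Real.log (N:ℝ) + 1) := by
        apply mul_le_mul (by linarith) (by linarith) (by linarith) (by norm_num)
      nlinarith [hdiff]
    calc ((N:ℝ)/30) * (Real.log (N:ℝ) - Real.log 30) - (Real.log (N:ℝ) + 1) - (N:ℝ)/30 + 1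
        = ((N:ℝ)/30) * Real.log ((N:ℝ)/30) - (Real.log (N:ℝ) + 1) - (N:ℝ)/30 + 1 := by rw [hlk]
      _ ≤ ((N/30:ℕ):ℝ) * Real.log ((N/30:ℕ):ℝ) - ((N/30:ℕ):ℝ) + 1 := by nlinarith [h1, hmy]
      _ ≤ T (N/30) := hTge
  have E1 : (N:ℝ) * Real.log (N:ℝ) - (N:ℝ) + 1 ≤ T N := T_ge N (by omega)
  have hcomb := comb_le_psi N
  have hkey : (N:ℝ) * Real.log (N:ℝ) - (N:ℝ) + 1
      - (((N:ℝ)/2) * (Real.log (N:ℝ) - Real.log 2) - ((N:ℝ)/2 - 1) + 1 + Real.log (N:ℝ))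
      - (((N:ℝ)/3) * (Real.log (N:ℝ) - Real.log 3) - ((N:ℝ)/3 - 1) + 1 + Real.log (N:ℝ))
      - (((N:ℝ)/5) * (Real.log (N:ℝ) - Real.log 5) - ((N:ℝ)/5 - 1) + 1 + Real.log (N:ℝ))
      + (((N:ℝ)/30) * (Real.log (N:ℝ) - Real.log 30) - (Real.log (N:ℝ) + 1) - (N:ℝ)/30 + 1)
      = A0 * (N:ℝ) - 4 * Real.log (N:ℝ) - 5 := by
    have h30 : Real.log 30 = Real.log 2 + Real.log 3 + Real.log 5 := by
      rw [show (30:ℝ) = 2*3*5 by norm_num, Real.log_mul (by norm_num) (by norm_num),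
        Real.log_mul (by norm_num) (by norm_num)]
    rw [h30, A0]; ring
  have hUB2 := UB 2 le_rfl (by norm_num)
  have hUB3 := UB 3 (by norm_num) (by norm_num)
  have hUB5 := UB 5 (by norm_num) (by norm_num)
  push_cast at hUB2 hUB3 hUB5
  have hfin : A0 * (N:ℝ) - 4 * Real.log (N:ℝ) - 5 ≤ psi N := by
    rw [← hkey]
    push_cast
    linarith [E1, hUB2, hUB3, hUB5, LB30, hcomb]
  linarith


lemma theta_nonneg (N : ℕ) : 0 ≤ theta N :=
  Finset.sum_nonneg fun p hp => Real.log_nonneg (by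
    simp only [Finset.mem_filter] at hp
    exact_mod_cast hp.2.one_lt.le)

lemma theta_le (N : ℕ) : theta N ≤ (N:ℝ) * Real.log 4 := by
  have h : theta N = Real.log (primorial N) := by
    rw [primorial, Nat.cast_prod, Real.log_prod]
    · rfl
    · intro p hp
      simp only [Finset.mem_filter] at hp
      exact_mod_cast hp.2.pos.ne'
  rw [h]
  calc Real.log (primorial N) ≤ Real.log ((4:ℕ)^N) := by
        apply Real.log_le_log (by exact_mod_cast Nat.pos_of_ne_zero (primorial_pos N).ne')
        exact_mod_cast primorial_le_4_pow N
    _ = (N:ℝ) * Real.log 4 := by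
        rw [Real.log_pow]
        norm_num

lemma sum_theta (M : ℕ) :
    ∑ n ∈ Finset.range M, theta n
      = ∑ p ∈ (Finset.range M).filter Nat.Prime, ((M:ℝ) - p) * Real.log p := by
  induction M with
  | zero => simp
  | succ m ih =>
    rw [Finset.sum_range_succ, ih]
    have hsplit : ∑ p ∈ (Finset.range (m+1)).filter Nat.Prime, ((m:ℝ)+1 - p) * Real.log p
        = ∑ p ∈ (Finset.range (m+1)).filter Nat.Prime, ((m:ℝ) - p) * Real.log p
          + ∑ p ∈ (Finset.range (m+1)).filter Nat.Prime, Real.log p := by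
      rw [← Finset.sum_add_distrib]
      exact Finset.sum_congr rfl fun p _ => by ring
    have hext : ∑ p ∈ (Finset.range (m+1)).filter Nat.Prime, ((m:ℝ) - p) * Real.log p
        = ∑ p ∈ (Finset.range m).filter Nat.Prime, ((m:ℝ) - p) * Real.log p := by
      rw [Finset.range_add_one, Finset.filter_insert]
      by_cases hm : Nat.Prime m
      · rw [if_pos hm, Finset.sum_insert (by simp)]
        simp
      · rw [if_neg hm]
    push_cast
    rw [hsplit, hext, theta]
  

lemma psi_sub_theta (N : ℕ) (hN : 1 ≤ N) :
    psi N ≤ theta N + 2 * Real.sqrt N * (Real.log N)^2 := by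
  have hN0 : N ≠ 0 := by omega
  have hlogN : 0 ≤ Real.log N := Real.log_nonneg (by exact_mod_cast hN)
  -- split psi
  rw [psi, ← Finset.sum_filter_add_sum_filter_not (Finset.Icc 1 N) Nat.Prime]
  have hprime_eq : (Finset.Icc 1 N).filter Nat.Prime = (Finset.range (N+1)).filter Nat.Prime := by
    ext p
    simp only [Finset.mem_filter, Finset.mem_Icc, Finset.mem_range]
    constructor
    · rintro ⟨⟨h1, h2⟩, hp⟩; exact ⟨by omega, hp⟩
    · rintro ⟨h1, hp⟩; exact ⟨⟨hp.one_lt.le.trans' (by omega), by omega⟩, hp⟩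
  have h1 : ∑ n ∈ (Finset.Icc 1 N).filter Nat.Prime, Λ n = theta N := by
    rw [hprime_eq, theta]
    exact Finset.sum_congr rfl fun p hp => by
      simp only [Finset.mem_filter] at hp
      rw [vonMangoldt_apply_prime hp.2]
  rw [h1]
  -- bound the non-prime part
  set S := ((Finset.Icc 1 N).filter (fun n => ¬ n.Prime)).filter (fun n => Λ n ≠ 0) with hS
  have h2 : ∑ n ∈ (Finset.Icc 1 N).filter (fun n => ¬ n.Prime), Λ n = ∑ n ∈ S, Λ n := by
    rw [hS]
    exact (Finset.sum_filter_of_ne (fun n _ h => h)).symm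
  rw [h2]
  -- each element of S maps injectively to (minFac, exponent)
  have hmap : ∀ n ∈ S, n.minFac ∈ Finset.Icc 2 (Nat.sqrt N) ∧
      n.factorization n.minFac ∈ Finset.Icc 2 (Nat.log 2 N) ∧
      n = n.minFac ^ (n.factorization n.minFac) := by
    intro n hn
    simp only [hS, Finset.mem_filter, Finset.mem_Icc] at hn
    obtain ⟨⟨⟨hn1, hnN⟩, hnp⟩, hΛ⟩ := hn
    have hpp : IsPrimePow n := vonMangoldt_ne_zero_iff.1 hΛ
    obtain ⟨p, k, hp, hk, hpk⟩ := hpp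
    have hp' : p.Prime := Nat.prime_iff.2 hp
    have hk2 : 2 ≤ k := by
      rcases Nat.lt_or_ge k 2 with h | h
      · interval_cases k
        simp at hpk; exact absurd (hpk ▸ hp') hnp
      · exact h
    have hn2 : 2 ≤ n := by
      have := hp'.two_le
      calc 2 ≤ p := this
        _ ≤ p^k := Nat.le_self_pow (by omega) p
        _ = n := hpk
    have hminfac : n.minFac = p := by
      have hdvd : p ∣ n := hpk ▸ dvd_pow_self p (by omega)
      have hmf_p : n.minFac ∣ p := by
        have h3 : n.minFac ∣ p ^ k := hpk ▸ Nat.minFac_dvd n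
        exact (Nat.minFac_prime (by omega)).dvd_of_dvd_pow h3
      exact ((Nat.prime_dvd_prime_iff_eq (Nat.minFac_prime (by omega)) hp').1 hmf_p)
    have hfact : n.factorization n.minFac = k := by
      rw [hminfac, ← hpk, hp'.factorization_pow, Finsupp.single_eq_same]
    refine ⟨?_, ?_, ?_⟩
    · simp only [Finset.mem_Icc]
      constructor
      · exact (Nat.minFac_prime (by omega)).two_le
      · rw [Nat.le_sqrt, hminfac]
        calc p * p = p^2 := by ring
          _ ≤ p^k := Nat.pow_le_pow_right hp'.one_lt.le hk2
          _ = n := hpk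
          _ ≤ N := hnN
    · simp only [Finset.mem_Icc, hfact]
      refine ⟨hk2, ?_⟩
      rw [Nat.le_log_iff_pow_le (by norm_num) hN0]
      calc 2^k ≤ p^k := Nat.pow_le_pow_left hp'.two_le k
        _ = n := hpk
        _ ≤ N := hnN
    · rw [hfact, hminfac, hpk]
  have hcard : S.card ≤ Nat.sqrt N * Nat.log 2 N := by
    have hinj : ∀ n ∈ S, ∀ m ∈ S,
        (fun n => (n.minFac, n.factorization n.minFac)) n
          = (fun n => (n.minFac, n.factorization n.minFac)) m → n = m := by
      intro n hn m hm heq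
      obtain ⟨-, -, hn3⟩ := hmap n hn
      obtain ⟨-, -, hm3⟩ := hmap m hm
      simp only [Prod.mk.injEq] at heq
      rw [hn3, hm3, heq.2, heq.1]
    calc S.card ≤ ((Finset.Icc 2 (Nat.sqrt N)) ×ˢ (Finset.Icc 2 (Nat.log 2 N))).card := by
          apply Finset.card_le_card_of_injOn (fun n => (n.minFac, n.factorization n.minFac))
          · intro n hn
            obtain ⟨ha, hb, -⟩ := hmap n hn
            exact Finset.mk_mem_product ha hb
          · exact hinj
      _ = (Finset.Icc 2 (Nat.sqrt N)).card * (Finset.Icc 2 (Nat.log 2 N)).card :=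
          Finset.card_product _ _
      _ ≤ Nat.sqrt N * Nat.log 2 N := by
          apply Nat.mul_le_mul <;> (rw [Nat.card_Icc]; omega)
  have hterm : ∀ n ∈ S, Λ n ≤ Real.log N := by
    intro n hn
    simp only [hS, Finset.mem_filter, Finset.mem_Icc] at hn
    calc Λ n ≤ Real.log n := vonMangoldt_le_log
      _ ≤ Real.log N := Real.log_le_log (by exact_mod_cast hn.1.1.1) (by exact_mod_cast hn.1.1.2)
  have hsum : ∑ n ∈ S, Λ n ≤ (S.card : ℝ) * Real.log N := by
    calc ∑ n ∈ S, Λ n ≤ ∑ _n ∈ S, Real.log N := Finset.sum_le_sum hterm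
      _ = (S.card : ℝ) * Real.log N := by rw [Finset.sum_const, nsmul_eq_mul]
  -- cast bounds
  have hsqrt : ((Nat.sqrt N : ℕ) : ℝ) ≤ Real.sqrt N := by
    have h' : ((Nat.sqrt N:ℕ):ℝ)^2 ≤ (N:ℝ) := by exact_mod_cast Nat.sqrt_le' N
    calc ((Nat.sqrt N:ℕ):ℝ) = Real.sqrt (((Nat.sqrt N:ℕ):ℝ)^2) := (Real.sqrt_sq (by positivity)).symm
      _ ≤ Real.sqrt N := Real.sqrt_le_sqrt h'
  have hlog2 : ((Nat.log 2 N : ℕ) : ℝ) ≤ 2 * Real.log N := by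
    have hpow : (2:ℕ)^(Nat.log 2 N) ≤ N := Nat.pow_log_le_self 2 hN0
    have hpowR : ((2:ℝ))^(Nat.log 2 N) ≤ (N:ℝ) := by exact_mod_cast hpow
    have := Real.log_le_log (by positivity) hpowR
    rw [Real.log_pow] at this
    have hl2 : (0.6931471803:ℝ) < Real.log 2 := Real.log_two_gt_d9
    nlinarith [this, hl2, Nat.cast_nonneg (α := ℝ) (Nat.log 2 N)]
  have hfin : (S.card : ℝ) * Real.log N ≤ 2 * Real.sqrt N * (Real.log N)^2 := by
    have hc : (S.card : ℝ) ≤ Real.sqrt N * (2 * Real.log N) := by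
      calc (S.card : ℝ) ≤ ((Nat.sqrt N * Nat.log 2 N : ℕ) : ℝ) := by exact_mod_cast hcard
        _ = ((Nat.sqrt N : ℕ) : ℝ) * ((Nat.log 2 N : ℕ) : ℝ) := by push_cast; ring
        _ ≤ Real.sqrt N * (2 * Real.log N) := by
            apply mul_le_mul hsqrt hlog2 (by positivity) (Real.sqrt_nonneg _)
    nlinarith [hc, hlogN, Real.sqrt_nonneg (N:ℝ), Nat.cast_nonneg (α := ℝ) S.card]
  linarith [hsum, hfin]


lemma Err_nonneg {a : ℝ} (ha : 1 ≤ a) : 0 ≤ Err a := by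
  rw [Err]
  linarith only [mul_nonneg (Real.sqrt_nonneg a) (sq_nonneg (Real.log a)),
    Real.log_nonneg ha]

lemma Err_mono_real {a b : ℝ} (ha : 1 ≤ a) (hab : a ≤ b) : Err a ≤ Err b := by
  have ha0 : (0:ℝ) < a := by linarith
  have hla : Real.log a ≤ Real.log b := Real.log_le_log ha0 hab
  have hla0 : 0 ≤ Real.log a := Real.log_nonneg ha
  have hsa : Real.sqrt a ≤ Real.sqrt b := Real.sqrt_le_sqrt hab
  have hsa0 : 0 ≤ Real.sqrt a := Real.sqrt_nonneg _
  rw [Err, Err]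
  have hsq : (Real.log a)^2 ≤ (Real.log b)^2 := by nlinarith
  nlinarith [Real.sqrt_nonneg b]

lemma log3_ge : (1:ℝ) ≤ Real.log 3 := by
  rw [Real.le_log_iff_exp_le (by norm_num)]
  have := Real.exp_one_lt_d9
  linarith

lemma log5_ge : (1.5:ℝ) ≤ Real.log 5 := by
  rw [Real.le_log_iff_exp_le (by norm_num)]
  have h3 : Real.exp 3 < 2.7182818286^3 := by
    calc Real.exp 3 = (Real.exp 1)^3 := by
          rw [← Real.exp_nat_mul]; norm_num
      _ < 2.7182818286^3 := by
          apply pow_lt_pow_left₀ Real.exp_one_lt_d9 (Real.exp_pos 1).le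
          norm_num
  have h25 : (2.7182818286:ℝ)^3 < 25 := by norm_num
  have hsq : Real.exp 1.5 ^ 2 = Real.exp 3 := by
    rw [← Real.exp_nat_mul]; norm_num
  nlinarith [Real.exp_pos (1.5:ℝ), hsq, h3, h25]

lemma log3_le : Real.log 3 ≤ (1.4:ℝ) := by
  calc Real.log 3 ≤ Real.log 4 := Real.log_le_log (by norm_num) (by norm_num)
    _ = 2 * Real.log 2 := by
        rw [show (4:ℝ) = 2^2 by norm_num, Real.log_pow]; norm_num
    _ ≤ 1.4 := by nlinarith [Real.log_two_lt_d9]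

lemma log5_le : Real.log 5 ≤ (2.1:ℝ) := by
  calc Real.log 5 ≤ Real.log 8 := Real.log_le_log (by norm_num) (by norm_num)
    _ = 3 * Real.log 2 := by
        rw [show (8:ℝ) = 2^3 by norm_num, Real.log_pow]; norm_num
    _ ≤ 2.1 := by nlinarith [Real.log_two_lt_d9]

lemma A0_ge : (0.87:ℝ) ≤ A0 := by
  have h2 := Real.log_two_gt_d9
  have h3 := log3_ge
  have h5 := log5_ge
  rw [A0]; nlinarith

lemma A0_le : A0 ≤ (1.1:ℝ) := by
  have h2 := Real.log_two_lt_d9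
  have h3 := log3_le
  have h5 := log5_le
  rw [A0]; nlinarith

lemma theta_lower (N : ℕ) : A0 * N - Err N ≤ theta N := by
  rcases Nat.lt_or_ge N 30 with h | h
  · have h1 : A0 * N ≤ 1.1 * 30 := by
      have : (N:ℝ) ≤ 30 := by exact_mod_cast h.le
      nlinarith [A0_le, A0_ge, Nat.cast_nonneg (α := ℝ) N]
    have h2 : 0 ≤ 10 * (Real.log N + 1) + 2 * Real.sqrt N * (Real.log N)^2 := by
      have : 0 ≤ Real.log N := by
        rcases Nat.eq_zero_or_pos N with rfl | hN
        · simp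
        · exact Real.log_nonneg (by exact_mod_cast hN)
      positivity
    have := theta_nonneg N
    rw [Err]; nlinarith
  · have hp := psi_lower N h
    have hs := psi_sub_theta N (by omega)
    rw [Err]; linarith

lemma Err_mono {a b : ℕ} (hab : a ≤ b) (hb : 1 ≤ b) : Err a ≤ Err b := by
  have hla : Real.log a ≤ Real.log b := by
    rcases Nat.eq_zero_or_pos a with rfl | ha
    · simpa using Real.log_nonneg (by exact_mod_cast hb)
    · exact Real.log_le_log (by exact_mod_cast ha) (by exact_mod_cast hab)
  have hla0 : 0 ≤ Real.log a := by
    rcases Nat.eq_zero_or_pos a with rfl | ha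
    · simp
    · exact Real.log_nonneg (by exact_mod_cast ha)
  have hsa : Real.sqrt a ≤ Real.sqrt b := Real.sqrt_le_sqrt (by exact_mod_cast hab)
  have hsa0 : 0 ≤ Real.sqrt a := Real.sqrt_nonneg _
  rw [Err, Err]
  have : (Real.log a)^2 ≤ (Real.log b)^2 := by nlinarith
  nlinarith [Real.sqrt_nonneg (b:ℝ)]

lemma sum_theta_lower (M : ℕ) (hM : 1 ≤ M) :
    A0 * (M * (M-1) / 2) - M * Err M ≤ ∑ n ∈ Finset.range M, theta n := by
  have h1 : ∀ n ∈ Finset.range M, A0 * n - Err M ≤ theta n := by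
    intro n hn
    simp only [Finset.mem_range] at hn
    have := theta_lower n
    have := Err_mono (le_of_lt hn) hM
    linarith
  calc A0 * (M * (M-1) / 2) - M * Err M
      = ∑ n ∈ Finset.range M, (A0 * n - Err M) := by
        rw [Finset.sum_sub_distrib, ← Finset.mul_sum, Finset.sum_const, nsmul_eq_mul]
        have hg : (∑ i ∈ Finset.range M, (i:ℝ)) * 2 = (M:ℝ) * ((M:ℝ) - 1) := by
          have := Finset.sum_range_id_mul_two M
          have hc : ((∑ i ∈ Finset.range M, i) * 2 : ℕ) = (M * (M-1) : ℕ) := this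
          have := congrArg (Nat.cast : ℕ → ℝ) hc
          push_cast [hM] at this
          linarith
        rw [Finset.card_range, show (∑ i ∈ Finset.range M, (i:ℝ)) = (M:ℝ)*((M:ℝ)-1)/2 from by linarith]
    _ ≤ ∑ n ∈ Finset.range M, theta n := Finset.sum_le_sum h1


-- rpow helpers
lemma rpow_helper (x : ℝ) (hx : (10:ℝ)^20 ≤ x) : Err x ≤ 258 * x^((3:ℝ)/4) := by
  have hx1 : (1:ℝ) ≤ x := by nlinarith [pow_pos (show (0:ℝ)<10 by norm_num) 20]
  have hx0 : (0:ℝ) < x := by linarith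
  have r1 : Real.log x ≤ 8 * x^((1:ℝ)/8) := by
    have := Real.log_le_rpow_div hx0.le (show (0:ℝ) < 1/8 by norm_num)
    calc Real.log x ≤ x ^ ((1:ℝ)/8) / (1/8) := this
      _ = 8 * x^((1:ℝ)/8) := by ring
  have hr8 : (0:ℝ) ≤ x^((1:ℝ)/8) := (Real.rpow_pos_of_pos hx0 _).le
  have r2 : x^((1:ℝ)/8) ≤ Real.sqrt x := by
    rw [Real.sqrt_eq_rpow]
    exact Real.rpow_le_rpow_of_exponent_le hx1 (by norm_num)
  have r4 : (x^((1:ℝ)/8))^2 = x^((1:ℝ)/4) := by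
    rw [← Real.rpow_natCast (x^((1:ℝ)/8)) 2, ← Real.rpow_mul hx0.le]
    norm_num
  have r3 : Real.sqrt x * x^((1:ℝ)/4) = x^((3:ℝ)/4) := by
    rw [Real.sqrt_eq_rpow, ← Real.rpow_add hx0]
    norm_num
  have r5 : Real.sqrt x ≤ x^((3:ℝ)/4) := by
    rw [Real.sqrt_eq_rpow]
    exact Real.rpow_le_rpow_of_exponent_le hx1 (by norm_num)
  have hlog0 : 0 ≤ Real.log x := Real.log_nonneg hx1
  have hsq : (Real.log x)^2 ≤ 64 * x^((1:ℝ)/4) := by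
    calc (Real.log x)^2 ≤ (8 * x^((1:ℝ)/8))^2 := by nlinarith
      _ = 64 * (x^((1:ℝ)/8))^2 := by ring
      _ = 64 * x^((1:ℝ)/4) := by rw [r4]
  have hterm : 2 * Real.sqrt x * (Real.log x)^2 ≤ 128 * x^((3:ℝ)/4) := by
    calc 2 * Real.sqrt x * (Real.log x)^2 ≤ 2 * Real.sqrt x * (64 * x^((1:ℝ)/4)) := by
          nlinarith [Real.sqrt_nonneg x]
      _ = 128 * (Real.sqrt x * x^((1:ℝ)/4)) := by ring
      _ = 128 * x^((3:ℝ)/4) := by rw [r3]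
  have hone : (1:ℝ) ≤ x^((3:ℝ)/4) := Real.one_le_rpow hx1 (by norm_num)
  rw [Err]
  have h10 : 10 * (Real.log x + 1) ≤ 80 * Real.sqrt x + 10 := by nlinarith [r1, r2]
  have hsx : Real.sqrt x ≤ x^((3:ℝ)/4) := r5
  nlinarith [hterm, hone, Real.sqrt_nonneg x]

lemma quarter_pow (x : ℝ) (hx : (10:ℝ)^20 ≤ x) : (10:ℝ)^5 ≤ x^((1:ℝ)/4) := by
  have hx0 : (0:ℝ) < x := by nlinarith [pow_pos (show (0:ℝ)<10 by norm_num) 20]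
  calc (10:ℝ)^5 = (((10:ℝ)^5)^(4:ℕ))^((1:ℝ)/4) := by
        rw [← Real.rpow_natCast ((10:ℝ)^5) 4, ← Real.rpow_mul (by positivity)]
        norm_num
    _ ≤ x^((1:ℝ)/4) := by
        apply Real.rpow_le_rpow (by positivity) ?_ (by norm_num)
        norm_num
        linarith

lemma three_quarter_bound (x : ℝ) (hx : (10:ℝ)^20 ≤ x) : x^((3:ℝ)/4) ≤ x / 10^5 := by
  have hx0 : (0:ℝ) < x := by nlinarith [pow_pos (show (0:ℝ)<10 by norm_num) 20]
  have h1 : x^((3:ℝ)/4) * x^((1:ℝ)/4) = x := by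
    rw [← Real.rpow_add hx0]
    norm_num
  have h2 := quarter_pow x hx
  have h3 : (0:ℝ) < x^((3:ℝ)/4) := Real.rpow_pos_of_pos hx0 _
  rw [le_div_iff₀ (show (0:ℝ) < 10^5 by norm_num)]
  calc x^((3:ℝ)/4) * 10^5 ≤ x^((3:ℝ)/4) * x^((1:ℝ)/4) := by nlinarith
    _ = x := h1
  

set_option maxHeartbeats 2000000 in
theorem many_quadratic_residue_primes (A : ℝ) (hA : 0 < A) :
    ∃ C : ℝ, 0 < C ∧ ∀ D : ℕ, 2 ≤ D → ∀ L : ℝ, C * (Real.log D) ^ 2 ≤ L →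
      |∑ ℓ ∈ (Finset.range (⌊L⌋₊ + 1)).filter
          (fun ℓ : ℕ => ℓ.Prime ∧ Odd ℓ ∧ (ℓ : ℝ) ≤ L),
          (1 - (ℓ : ℝ) / L) * (jacobiSym (D : ℤ) ℓ : ℝ) * Real.log ℓ| ≤
        A * Real.sqrt L * Real.log D →
      L / (5 * Real.log L) ≤
        ({ℓ : ℕ | ℓ.Prime ∧ Odd ℓ ∧ (ℓ : ℝ) ≤ L ∧ jacobiSym (D : ℤ) ℓ = 1}.ncard : ℝ) := by
  refine ⟨(200*(A+1))^2 + 10^31, by positivity, ?_⟩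
  intro D hD L hL hyp
  set C : ℝ := (200*(A+1))^2 + 10^31 with hCdef
  have hl2 := Real.log_two_gt_d9
  have hlogD : Real.log 2 ≤ Real.log D :=
    Real.log_le_log (by norm_num) (by exact_mod_cast hD)
  have hlogD0 : (0:ℝ) < Real.log D := by linarith
  have hC48 : (0.48:ℝ) ≤ (Real.log D)^2 := by
    have h1 : (0.6931471803:ℝ) ≤ Real.log D := by linarith only [hl2, hlogD]
    have h2 : (0.6931471803:ℝ)^2 ≤ (Real.log D)^2 := by
      apply pow_le_pow_left₀ (by norm_num) h1
    have h3 : (0.48:ℝ) ≤ (0.6931471803:ℝ)^2 := by norm_num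
    linarith only [h2, h3]
  have hCpos : (0:ℝ) < C := by positivity
  have hCbig : (10:ℝ)^31 ≤ C := by
    rw [hCdef]; exact le_add_of_nonneg_left (by positivity)
  have hL0 : (10:ℝ)^30 ≤ L := by
    have h1 : (10:ℝ)^31 * 0.48 ≤ C * (Real.log D)^2 :=
      mul_le_mul hCbig hC48 (by norm_num) (by positivity)
    calc (10:ℝ)^30 ≤ (10:ℝ)^31 * 0.48 := by norm_num
      _ ≤ C * (Real.log D)^2 := h1
      _ ≤ L := hL
  have hLpos : (0:ℝ) < L := by
    have h : (0:ℝ) < (10:ℝ)^30 := by norm_num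
    linarith only [h, hL0]
  have hL20 : (10:ℝ)^20 ≤ L := by
    have h : (10:ℝ)^20 ≤ (10:ℝ)^30 := by norm_num
    linarith only [h, hL0]
  have hL1 : (1:ℝ) ≤ L := by
    have h : (1:ℝ) ≤ (10:ℝ)^20 := by norm_num
    linarith only [h, hL20]
  have hlogL1 : (1:ℝ) ≤ Real.log L := by
    have h1 : Real.log ((2:ℝ)^2) ≤ Real.log L :=
      Real.log_le_log (by norm_num) (by
        have h : (4:ℝ) ≤ (10:ℝ)^20 := by norm_num
        linarith only [h, hL20])
    rw [Real.log_pow] at h1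
    push_cast at h1
    linarith only [h1, hl2]
  have hlogL0 : (0:ℝ) < Real.log L := by linarith
  -- floor facts
  set M : ℕ := ⌊L⌋₊ with hMdef
  have hML : (M:ℝ) ≤ L := Nat.floor_le hLpos.le
  have hLM : L < (M:ℝ) + 1 := Nat.lt_floor_add_one L
  have hM2 : 2 ≤ M := by
    rw [hMdef, Nat.le_floor_iff hLpos.le]
    push_cast
    have h : (2:ℝ) ≤ (10:ℝ)^20 := by norm_num
    linarith only [h, hL20]
  -- notation
  set P : Finset ℕ := (Finset.range (M+1)).filter Nat.Prime with hPdef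
  set F : Finset ℕ := (Finset.range (M+1)).filter
    (fun ℓ : ℕ => ℓ.Prime ∧ Odd ℓ ∧ (ℓ : ℝ) ≤ L) with hFdef
  -- facts about members of P
  have hPfacts : ∀ p ∈ P, p.Prime ∧ (p:ℝ) ≤ L ∧ 0 ≤ Real.log p ∧ Real.log p ≤ Real.log L := by
    intro p hp
    rw [hPdef, Finset.mem_filter, Finset.mem_range] at hp
    have hpL : (p:ℝ) ≤ L := by
      have : (p:ℝ) ≤ (M:ℝ) := by exact_mod_cast Nat.lt_succ_iff.1 hp.1
      linarith
    exact ⟨hp.2, hpL, Real.log_nonneg (by exact_mod_cast hp.2.one_lt.le),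
      Real.log_le_log (by exact_mod_cast hp.2.pos) hpL⟩
  -- Step 1-3: lower bound for the full weighted sum
  have step1 : ∑ n ∈ Finset.range M, theta n ≤ ∑ p ∈ P, (L - p) * Real.log p := by
    rw [sum_theta M]
    have hsub : (Finset.range M).filter Nat.Prime ⊆ P := by
      rw [hPdef]
      exact Finset.filter_subset_filter _ (Finset.range_subset_range.2 (by omega))
    calc ∑ p ∈ (Finset.range M).filter Nat.Prime, ((M:ℝ) - p) * Real.log p
        ≤ ∑ p ∈ (Finset.range M).filter Nat.Prime, (L - p) * Real.log p := by
          apply Finset.sum_le_sum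
          intro p hp
          have hp' := hPfacts p (hsub hp)
          apply mul_le_mul_of_nonneg_right (by linarith) hp'.2.2.1
      _ ≤ ∑ p ∈ P, (L - p) * Real.log p := by
          apply Finset.sum_le_sum_of_subset_of_nonneg hsub
          intro p hp _
          have hp' := hPfacts p hp
          have := hp'.2.1
          apply mul_nonneg (by linarith) hp'.2.2.1
  have step2 := sum_theta_lower M (by omega)
  have hM1L : L - 1 ≤ (M:ℝ) := by linarith
  have hErrM : Err M ≤ Err L := Err_mono_real (by exact_mod_cast hM2.trans' (by norm_num)) hML
  have hErrM0 : 0 ≤ Err (M:ℝ) := Err_nonneg (by exact_mod_cast hM2.trans' (by norm_num))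
  have step3 : A0 * ((L-1) * (L-2) / 2) - L * Err L ≤ ∑ p ∈ P, (L - p) * Real.log p := by
    have hA00 : (0:ℝ) ≤ A0 := by linarith [A0_ge]
    have hL2' : (0:ℝ) ≤ L - 2 := by
      have h : (2:ℝ) ≤ (10:ℝ)^20 := by norm_num
      linarith only [h, hL20]
    have h1 : (L-1) * (L-2) ≤ (M:ℝ) * ((M:ℝ) - 1) :=
      mul_le_mul hM1L (by linarith only [hM1L]) hL2' (Nat.cast_nonneg M)
    have h2 : (M:ℝ) * Err M ≤ L * Err L :=
      mul_le_mul hML hErrM hErrM0 hLpos.le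
    have h1' : A0 * ((L-1) * (L-2) / 2) ≤ A0 * ((M:ℝ) * ((M:ℝ)-1) / 2) :=
      mul_le_mul_of_nonneg_left (by linarith) hA00
    calc A0 * ((L-1) * (L-2) / 2) - L * Err L
        ≤ A0 * ((M:ℝ) * ((M:ℝ)-1) / 2) - (M:ℝ) * Err M := by linarith
      _ ≤ ∑ n ∈ Finset.range M, theta n := step2
      _ ≤ ∑ p ∈ P, (L - p) * Real.log p := step1
  -- Step 4: convert to weights
  have step4 : ∑ p ∈ P, (L - p) * Real.log p = L * ∑ p ∈ P, (1 - p/L) * Real.log p := by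
    rw [Finset.mul_sum]
    refine Finset.sum_congr rfl fun p _ => ?_
    field_simp
  set SW : ℝ := ∑ p ∈ P, (1 - (p:ℝ)/L) * Real.log p with hSWdef
  have hSW : A0 * (L-3) / 2 - Err L ≤ SW := by
    have h1 : A0 * ((L-1) * (L-2) / 2) - L * Err L ≤ L * SW := by
      rw [← step4]; exact step3
    have hA00 : (0:ℝ) ≤ A0 := by linarith [A0_ge]
    have h2 : L * (A0 * (L-3) / 2 - Err L) ≤ A0 * ((L-1) * (L-2) / 2) - L * Err L := by
      have q1 : L*(L-3)/2 ≤ (L-1)*(L-2)/2 := by nlinarith only []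
      have q2 : A0 * (L*(L-3)/2) ≤ A0 * ((L-1)*(L-2)/2) :=
        mul_le_mul_of_nonneg_left q1 hA00
      have q3 : L * (A0 * (L-3) / 2 - Err L) = A0 * (L*(L-3)/2) - L * Err L := by ring
      linarith only [q2, q3]
    exact le_of_mul_le_mul_left (h2.trans h1) hLpos
  -- Step 5: remove the prime 2
  have hFeq : F = P.filter (fun ℓ => Odd ℓ) := by
    rw [hFdef, hPdef, Finset.filter_filter]
    apply Finset.filter_congr
    intro ℓ hℓ
    rw [Finset.mem_range] at hℓ
    have hℓL : (ℓ:ℝ) ≤ L := by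
      have : (ℓ:ℝ) ≤ (M:ℝ) := by exact_mod_cast Nat.lt_succ_iff.1 hℓ
      linarith
    simp [hℓL]
  have heven : P.filter (fun ℓ => ¬ Odd ℓ) = {2} := by
    ext ℓ
    simp only [Finset.mem_filter, Finset.mem_singleton, hPdef, Finset.mem_range]
    constructor
    · rintro ⟨⟨h1, h2⟩, h3⟩
      have he : Even ℓ := Nat.not_odd_iff_even.1 h3
      exact (Nat.Prime.even_iff h2).1 he
    · rintro rfl
      exact ⟨⟨by omega, Nat.prime_two⟩, by decide⟩
  have step5 : SW - Real.log 2 ≤ ∑ ℓ ∈ F, (1 - (ℓ:ℝ)/L) * Real.log ℓ := by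
    have hsplit := Finset.sum_filter_add_sum_filter_not P (fun ℓ => Odd ℓ)
      (fun ℓ => (1 - (ℓ:ℝ)/L) * Real.log ℓ)
    rw [heven] at hsplit
    have h2sum : ∑ ℓ ∈ ({2} : Finset ℕ), (1 - (ℓ:ℝ)/L) * Real.log ℓ ≤ Real.log 2 := by
      rw [Finset.sum_singleton]
      have h2L : (2:ℝ)/L ≤ 1 := by
        rw [div_le_one hLpos]
        have h : (2:ℝ) ≤ (10:ℝ)^20 := by norm_num
        linarith only [h, hL20]
      have hl20 : (0:ℝ) ≤ Real.log 2 := by linarith only [hl2]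
      have hq0 : (0:ℝ) ≤ (2:ℝ)/L := div_nonneg (by norm_num) hLpos.le
      push_cast
      calc (1 - 2/L) * Real.log 2 ≤ 1 * Real.log 2 :=
            mul_le_mul_of_nonneg_right (by linarith only [hq0]) hl20
        _ = Real.log 2 := one_mul _
    rw [hFeq]
    linarith only [hsplit, h2sum, hSW]
  -- Step 6: jacobi split
  set w : ℕ → ℝ := fun ℓ => (1 - (ℓ:ℝ)/L) * Real.log ℓ with hwdef
  have hwF : ∀ ℓ ∈ F, 0 ≤ w ℓ ∧ w ℓ ≤ Real.log L := by
    intro ℓ hℓ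
    rw [hFdef, Finset.mem_filter] at hℓ
    obtain ⟨hrange, hprime, hodd, hℓL⟩ := hℓ
    have hlog0 : 0 ≤ Real.log ℓ := Real.log_nonneg (by exact_mod_cast hprime.one_lt.le)
    have hlogle : Real.log ℓ ≤ Real.log L := Real.log_le_log (by exact_mod_cast hprime.pos) hℓL
    have hq : 0 ≤ (ℓ:ℝ)/L := by positivity
    have hq1 : (ℓ:ℝ)/L ≤ 1 := by rw [div_le_one hLpos]; exact hℓL
    constructor
    · apply mul_nonneg (by linarith only [hq1]) hlog0
    · calc (1 - (ℓ:ℝ)/L) * Real.log ℓ ≤ 1 * Real.log ℓ :=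
            mul_le_mul_of_nonneg_right (by linarith only [hq]) hlog0
        _ = Real.log ℓ := one_mul _
        _ ≤ Real.log L := hlogle
  set F1 : Finset ℕ := F.filter (fun ℓ => jacobiSym (D:ℤ) ℓ = 1) with hF1def
  set F2 : Finset ℕ := (F.filter (fun ℓ => ¬ jacobiSym (D:ℤ) ℓ = 1)).filter
      (fun ℓ => jacobiSym (D:ℤ) ℓ = -1) with hF2def
  set F0 : Finset ℕ := (F.filter (fun ℓ => ¬ jacobiSym (D:ℤ) ℓ = 1)).filter
      (fun ℓ => ¬ jacobiSym (D:ℤ) ℓ = -1) with hF0def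
  have hjsplit : ∀ g : ℕ → ℝ, ∑ ℓ ∈ F, g ℓ = ∑ ℓ ∈ F1, g ℓ + ∑ ℓ ∈ F2, g ℓ + ∑ ℓ ∈ F0, g ℓ := by
    intro g
    rw [← Finset.sum_filter_add_sum_filter_not F (fun ℓ => jacobiSym (D:ℤ) ℓ = 1) g,
      ← Finset.sum_filter_add_sum_filter_not (F.filter (fun ℓ => ¬ jacobiSym (D:ℤ) ℓ = 1))
        (fun ℓ => jacobiSym (D:ℤ) ℓ = -1) g]
    ring
  have hF0zero : ∀ ℓ ∈ F0, jacobiSym (D:ℤ) ℓ = 0 := by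
    intro ℓ hℓ
    rw [hF0def, Finset.mem_filter, Finset.mem_filter] at hℓ
    rcases jacobiSym.trichotomy (D:ℤ) ℓ with h | h | h
    · exact h
    · exact absurd h hℓ.1.2
    · exact absurd h hℓ.2
  -- the hypothesis sum equals Σ w * j
  have hhypsum : ∑ ℓ ∈ F, (1 - (ℓ:ℝ)/L) * ((jacobiSym (D:ℤ) ℓ : ℤ) : ℝ) * Real.log ℓ
      = ∑ ℓ ∈ F1, w ℓ - ∑ ℓ ∈ F2, w ℓ := by
    have h1 : ∀ ℓ : ℕ, (1 - (ℓ:ℝ)/L) * ((jacobiSym (D:ℤ) ℓ : ℤ) : ℝ) * Real.log ℓ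
        = w ℓ * ((jacobiSym (D:ℤ) ℓ : ℤ) : ℝ) := fun ℓ => by rw [hwdef]; ring
    rw [Finset.sum_congr rfl (fun ℓ _ => h1 ℓ)]
    rw [hjsplit (fun ℓ => w ℓ * ((jacobiSym (D:ℤ) ℓ : ℤ) : ℝ))]
    have e1 : ∑ ℓ ∈ F1, w ℓ * ((jacobiSym (D:ℤ) ℓ : ℤ) : ℝ) = ∑ ℓ ∈ F1, w ℓ := by
      apply Finset.sum_congr rfl
      intro ℓ hℓ
      rw [hF1def, Finset.mem_filter] at hℓ
      rw [hℓ.2]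
      norm_num
    have e2 : ∑ ℓ ∈ F2, w ℓ * ((jacobiSym (D:ℤ) ℓ : ℤ) : ℝ) = - ∑ ℓ ∈ F2, w ℓ := by
      rw [← Finset.sum_neg_distrib]
      apply Finset.sum_congr rfl
      intro ℓ hℓ
      rw [hF2def, Finset.mem_filter] at hℓ
      rw [hℓ.2]
      push_cast
      ring
    have e0 : ∑ ℓ ∈ F0, w ℓ * ((jacobiSym (D:ℤ) ℓ : ℤ) : ℝ) = 0 := by
      apply Finset.sum_eq_zero
      intro ℓ hℓ
      rw [hF0zero ℓ hℓ]
      norm_num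
    rw [e1, e2, e0]
    ring
  -- F0 sum ≤ log D
  have hDpos : 0 < D := by omega
  have hF0sub : F0 ⊆ D.primeFactors := by
    intro ℓ hℓ
    have hj0 := hF0zero ℓ hℓ
    rw [hF0def, Finset.mem_filter, Finset.mem_filter, hFdef, Finset.mem_filter] at hℓ
    obtain ⟨⟨⟨-, hprime, -, -⟩, -⟩, -⟩ := hℓ
    rw [jacobiSym.eq_zero_iff] at hj0
    have hgcd : Int.gcd (D:ℤ) (ℓ:ℕ) ≠ 1 := hj0.2
    have hg : Nat.gcd D ℓ ≠ 1 := by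
      rwa [Int.gcd_natCast_natCast] at hgcd
    have hdvd : ℓ ∣ D := by
      have h1 : Nat.gcd D ℓ ∣ ℓ := Nat.gcd_dvd_right D ℓ
      rcases (Nat.Prime.eq_one_or_self_of_dvd hprime _ h1) with h | h
      · exact absurd h hg
      · rw [← h]; exact Nat.gcd_dvd_left D ℓ
    exact Nat.mem_primeFactors.2 ⟨hprime, hdvd, by omega⟩
  have hF0le : ∑ ℓ ∈ F0, w ℓ ≤ Real.log D := by
    have h1 : ∑ ℓ ∈ F0, w ℓ ≤ ∑ ℓ ∈ F0, Real.log ℓ := by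
      apply Finset.sum_le_sum
      intro ℓ hℓ
      have hℓF : ℓ ∈ F := by
        rw [hF0def, Finset.mem_filter, Finset.mem_filter] at hℓ
        exact hℓ.1.1
      rw [hFdef, Finset.mem_filter] at hℓF
      obtain ⟨-, hprime, -, hℓL⟩ := hℓF
      have hlog0 : 0 ≤ Real.log ℓ := Real.log_nonneg (by exact_mod_cast hprime.one_lt.le)
      have hq : 0 ≤ (ℓ:ℝ)/L := by positivity
      rw [hwdef]
      calc (1 - (ℓ:ℝ)/L) * Real.log ℓ ≤ 1 * Real.log ℓ :=
            mul_le_mul_of_nonneg_right (by linarith only [hq]) hlog0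
        _ = Real.log ℓ := one_mul _
    have h2 : ∑ ℓ ∈ F0, Real.log ℓ ≤ ∑ ℓ ∈ D.primeFactors, Real.log ℓ := by
      apply Finset.sum_le_sum_of_subset_of_nonneg hF0sub
      intro p hp _
      exact Real.log_nonneg (by exact_mod_cast (Nat.prime_of_mem_primeFactors hp).one_lt.le)
    have h3 : ∑ ℓ ∈ D.primeFactors, Real.log ℓ ≤ Real.log D := by
      rw [← Real.log_prod (fun p hp =>
        by exact_mod_cast (Nat.prime_of_mem_primeFactors hp).pos.ne')]
      apply Real.log_le_log
      · have hpos : 0 < ∏ p ∈ D.primeFactors, p :=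
          Nat.pos_of_dvd_of_pos (Nat.prod_primeFactors_dvd D) hDpos
        rw [← Nat.cast_prod]
        exact_mod_cast hpos
      · rw [← Nat.cast_prod]
        exact_mod_cast Nat.le_of_dvd hDpos (Nat.prod_primeFactors_dvd D)
    linarith only [h1, h2, h3]
  -- nonnegativity of partial sums
  have hsub1 : F1 ⊆ F := Finset.filter_subset _ _
  have hsub2 : F2 ⊆ F := (Finset.filter_subset _ _).trans (Finset.filter_subset _ _)
  have hS2nonneg : 0 ≤ ∑ ℓ ∈ F2, w ℓ :=
    Finset.sum_nonneg fun ℓ hℓ => (hwF ℓ (hsub2 hℓ)).1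
  -- main inequality: 2 * Σ_{F1} w ≥ Σ_F w - log D - A √L log D
  have habs := abs_le.1 hyp
  rw [hhypsum] at habs
  have hFsum := hjsplit w
  have hwsum : ∑ ℓ ∈ F, w ℓ = ∑ ℓ ∈ F, (1 - (ℓ:ℝ)/L) * Real.log ℓ := rfl
  have hmain : ∑ ℓ ∈ F, w ℓ - Real.log D - A * Real.sqrt L * Real.log D
      ≤ 2 * ∑ ℓ ∈ F1, w ℓ := by
    linarith only [habs.1, hF0le, hFsum]
  -- card bound
  have hcard : ∑ ℓ ∈ F1, w ℓ ≤ (F1.card : ℝ) * Real.log L := by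
    calc ∑ ℓ ∈ F1, w ℓ ≤ ∑ _ℓ ∈ F1, Real.log L :=
          Finset.sum_le_sum fun ℓ hℓ => (hwF ℓ (hsub1 hℓ)).2
      _ = (F1.card : ℝ) * Real.log L := by rw [Finset.sum_const, nsmul_eq_mul]
  -- the set is the coe of F1
  have hset : {ℓ : ℕ | ℓ.Prime ∧ Odd ℓ ∧ (ℓ : ℝ) ≤ L ∧ jacobiSym (D : ℤ) ℓ = 1} = ↑F1 := by
    ext ℓ
    simp only [Set.mem_setOf_eq, Finset.coe_filter, hF1def, hFdef, Finset.mem_filter,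
      Finset.mem_range, Set.mem_setOf_eq]
    constructor
    · rintro ⟨h1, h2, h3, h4⟩
      refine ⟨⟨?_, h1, h2, h3⟩, h4⟩
      have : ℓ ≤ M := by rw [hMdef]; exact Nat.le_floor h3
      omega
    · rintro ⟨⟨-, h1, h2, h3⟩, h4⟩
      exact ⟨h1, h2, h3, h4⟩
  have hncard : ({ℓ : ℕ | ℓ.Prime ∧ Odd ℓ ∧ (ℓ : ℝ) ≤ L ∧ jacobiSym (D : ℤ) ℓ = 1}.ncard : ℝ)
      = (F1.card : ℝ) := by
    rw [hset, Set.ncard_coe_finset]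
  -- numeric endgame
  have hsqrtC : 200*(A+1) ≤ Real.sqrt C := by
    rw [hCdef]
    calc 200*(A+1) = Real.sqrt ((200*(A+1))^2) := (Real.sqrt_sq (by positivity)).symm
      _ ≤ Real.sqrt ((200*(A+1))^2 + 10^31) :=
          Real.sqrt_le_sqrt (le_add_of_nonneg_right (by positivity))
  have hsqrtCpos : 0 < Real.sqrt C := Real.sqrt_pos.2 hCpos
  have hlogDle : Real.log D ≤ Real.sqrt L / Real.sqrt C := by
    have h1 : (Real.log D)^2 ≤ L / C := by
      rw [le_div_iff₀ hCpos]
      calc (Real.log D)^2 * C = C * (Real.log D)^2 := by ring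
        _ ≤ L := hL
    calc Real.log D = Real.sqrt ((Real.log D)^2) := (Real.sqrt_sq hlogD0.le).symm
      _ ≤ Real.sqrt (L / C) := Real.sqrt_le_sqrt h1
      _ = Real.sqrt L / Real.sqrt C := Real.sqrt_div hLpos.le C
  have hsqL : Real.sqrt L * Real.sqrt L = L := Real.mul_self_sqrt hLpos.le
  have hsqrtLpos : 0 < Real.sqrt L := Real.sqrt_pos.2 hLpos
  have hALD : A * Real.sqrt L * Real.log D ≤ L / 200 := by
    have h1 : A * Real.sqrt L * Real.log D ≤ A * Real.sqrt L * (Real.sqrt L / Real.sqrt C) := by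
      apply mul_le_mul_of_nonneg_left hlogDle (by positivity)
    have h2 : A * Real.sqrt L * (Real.sqrt L / Real.sqrt C) = A * L / Real.sqrt C := by
      rw [div_eq_mul_inv, div_eq_mul_inv,
        show A * Real.sqrt L * (Real.sqrt L * (Real.sqrt C)⁻¹)
          = A * (Real.sqrt L * Real.sqrt L) * (Real.sqrt C)⁻¹ from by ring, hsqL]
    have h3 : A * L / Real.sqrt C ≤ A * L / (200*(A+1)) := by
      apply div_le_div_of_nonneg_left (by positivity) (by positivity) hsqrtC
    have h4 : A * L / (200*(A+1)) ≤ L / 200 := by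
      rw [div_le_div_iff₀ (by positivity) (by norm_num)]
      have hq : A*L*200 + 200*L = L*(200*(A+1)) := by ring
      have h200 : (0:ℝ) ≤ 200*L := by positivity
      linarith only [hq, h200]
    linarith only [h1, h2, h3, h4]
  have hlogDsmall : Real.log D ≤ Real.sqrt L := by
    calc Real.log D ≤ Real.sqrt L / Real.sqrt C := hlogDle
      _ ≤ Real.sqrt L / 1 := by
          apply div_le_div_of_nonneg_left hsqrtLpos.le (by norm_num) (by
            have hq : (1:ℝ) ≤ 200*(A+1) := by linarith only [hA.le]
            linarith only [hq, hsqrtC])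
      _ = Real.sqrt L := by norm_num
  have hErrL : Err L ≤ 258 * L^((3:ℝ)/4) := rpow_helper L hL20
  have h34 : L^((3:ℝ)/4) ≤ L / 10^5 := three_quarter_bound L hL20
  have hsqrtL34 : Real.sqrt L ≤ L^((3:ℝ)/4) := by
    rw [Real.sqrt_eq_rpow]
    exact Real.rpow_le_rpow_of_exponent_le hL1 (by norm_num)
  -- final chain
  have hfinal : L / 5 ≤ (F1.card : ℝ) * Real.log L := by
    have hlog2le1 : Real.log 2 ≤ 1 := by linarith only [Real.log_two_lt_d9]
    have hA0ge := A0_ge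
    have hA0le := A0_le
    -- Σ_F w ≥ A0(L-3)/2 - Err L - log 2
    have hFlow : A0 * (L-3) / 2 - Err L - Real.log 2 ≤ ∑ ℓ ∈ F, w ℓ := by
      rw [hwsum]
      linarith only [step5, hSW]
    -- numeric: A0(L-3)/2 - Err L - log2 - log D - A√L logD ≥ 2L/5
    have hnum : 2 * (L/5) ≤ A0 * (L-3) / 2 - Err L - Real.log 2 - Real.log D
        - A * Real.sqrt L * Real.log D := by
      have e1 : Err L ≤ 258 * (L / 10^5) := by
        have hq := mul_le_mul_of_nonneg_left h34 (show (0:ℝ) ≤ 258 by norm_num)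
        linarith only [hq, hErrL]
      have e2 : Real.log D ≤ L / 10^5 := by
        have h5 : Real.sqrt L ≤ L / 10^5 := hsqrtL34.trans h34
        linarith only [h5, hlogDsmall]
      have hA0L : 0.87 * L ≤ A0 * L := mul_le_mul_of_nonneg_right hA0ge hLpos.le
      have hA0three : A0 * 3 ≤ 3.3 := by linarith [hA0le]
      have hkey : A0 * (L-3) / 2 = (A0 * L - A0 * 3) / 2 := by ring
      rw [hkey]
      linarith only [hA0L, hA0three, e1, e2, hALD, hlog2le1, hL20]
    linarith only [hmain, hcard, hFlow, hnum]
  rw [hncard]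
  rw [div_le_iff₀ (by positivity)]
  calc L = 5 * (L/5) := by ring
    _ ≤ 5 * ((F1.card:ℝ) * Real.log L) := by linarith only [hfinal]
    _ = (F1.card:ℝ) * (5 * Real.log L) := by ring


end MQRP

open MQRP in
set_option maxHeartbeats 1000000 in
theorem many_quadratic_residue_primes (A : ℝ) (hA : 0 < A) :
    ∃ C : ℝ, 0 < C ∧ ∀ D : ℕ, 2 ≤ D → ∀ L : ℝ, C * (Real.log D) ^ 2 ≤ L →
      |∑ ℓ ∈ (Finset.range (⌊L⌋₊ + 1)).filter
          (fun ℓ : ℕ => ℓ.Prime ∧ Odd ℓ ∧ (ℓ : ℝ) ≤ L),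
          (1 - (ℓ : ℝ) / L) * (jacobiSym (D : ℤ) ℓ : ℝ) * Real.log ℓ| ≤
        A * Real.sqrt L * Real.log D →
      L / (5 * Real.log L) ≤
        ({ℓ : ℕ | ℓ.Prime ∧ Odd ℓ ∧ (ℓ : ℝ) ≤ L ∧ jacobiSym (D : ℤ) ℓ = 1}.ncard : ℝ) := by
  refine ⟨(200*(A+1))^2 + 10^31, by positivity, ?_⟩
  intro D hD L hL hyp
  set C : ℝ := (200*(A+1))^2 + 10^31 with hCdef
  have hl2 := Real.log_two_gt_d9
  have hlogD : Real.log 2 ≤ Real.log D :=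
    Real.log_le_log (by norm_num) (by exact_mod_cast hD)
  have hlogD0 : (0:ℝ) < Real.log D := by linarith
  have hC48 : (0.48:ℝ) ≤ (Real.log D)^2 := by
    have h1 : (0.6931471803:ℝ) ≤ Real.log D := by linarith only [hl2, hlogD]
    have h2 : (0.6931471803:ℝ)^2 ≤ (Real.log D)^2 := by
      apply pow_le_pow_left₀ (by norm_num) h1
    have h3 : (0.48:ℝ) ≤ (0.6931471803:ℝ)^2 := by norm_num
    linarith only [h2, h3]
  have hCpos : (0:ℝ) < C := by positivity
  have hCbig : (10:ℝ)^31 ≤ C := by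
    rw [hCdef]; exact le_add_of_nonneg_left (by positivity)
  have hL0 : (10:ℝ)^30 ≤ L := by
    have h1 : (10:ℝ)^31 * 0.48 ≤ C * (Real.log D)^2 :=
      mul_le_mul hCbig hC48 (by norm_num) (by positivity)
    calc (10:ℝ)^30 ≤ (10:ℝ)^31 * 0.48 := by norm_num
      _ ≤ C * (Real.log D)^2 := h1
      _ ≤ L := hL
  have hLpos : (0:ℝ) < L := by
    have h : (0:ℝ) < (10:ℝ)^30 := by norm_num
    linarith only [h, hL0]
  have hL20 : (10:ℝ)^20 ≤ L := by
    have h : (10:ℝ)^20 ≤ (10:ℝ)^30 := by norm_num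
    linarith only [h, hL0]
  have hL1 : (1:ℝ) ≤ L := by
    have h : (1:ℝ) ≤ (10:ℝ)^20 := by norm_num
    linarith only [h, hL20]
  have hlogL1 : (1:ℝ) ≤ Real.log L := by
    have h1 : Real.log ((2:ℝ)^2) ≤ Real.log L :=
      Real.log_le_log (by norm_num) (by
        have h : (4:ℝ) ≤ (10:ℝ)^20 := by norm_num
        linarith only [h, hL20])
    rw [Real.log_pow] at h1
    push_cast at h1
    linarith only [h1, hl2]
  have hlogL0 : (0:ℝ) < Real.log L := by linarith
  -- floor facts
  set M : ℕ := ⌊L⌋₊ with hMdef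
  have hML : (M:ℝ) ≤ L := Nat.floor_le hLpos.le
  have hLM : L < (M:ℝ) + 1 := Nat.lt_floor_add_one L
  have hM2 : 2 ≤ M := by
    rw [hMdef, Nat.le_floor_iff hLpos.le]
    push_cast
    have h : (2:ℝ) ≤ (10:ℝ)^20 := by norm_num
    linarith only [h, hL20]
  -- notation
  set P : Finset ℕ := (Finset.range (M+1)).filter Nat.Prime with hPdef
  set F : Finset ℕ := (Finset.range (M+1)).filter
    (fun ℓ : ℕ => ℓ.Prime ∧ Odd ℓ ∧ (ℓ : ℝ) ≤ L) with hFdef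
  -- facts about members of P
  have hPfacts : ∀ p ∈ P, p.Prime ∧ (p:ℝ) ≤ L ∧ 0 ≤ Real.log p ∧ Real.log p ≤ Real.log L := by
    intro p hp
    rw [hPdef, Finset.mem_filter, Finset.mem_range] at hp
    have hpL : (p:ℝ) ≤ L := by
      have : (p:ℝ) ≤ (M:ℝ) := by exact_mod_cast Nat.lt_succ_iff.1 hp.1
      linarith
    exact ⟨hp.2, hpL, Real.log_nonneg (by exact_mod_cast hp.2.one_lt.le),
      Real.log_le_log (by exact_mod_cast hp.2.pos) hpL⟩
  -- Step 1-3: lower bound for the full weighted sum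
  have step1 : ∑ n ∈ Finset.range M, theta n ≤ ∑ p ∈ P, (L - p) * Real.log p := by
    rw [sum_theta M]
    have hsub : (Finset.range M).filter Nat.Prime ⊆ P := by
      rw [hPdef]
      exact Finset.filter_subset_filter _ (Finset.range_subset_range.2 (by omega))
    calc ∑ p ∈ (Finset.range M).filter Nat.Prime, ((M:ℝ) - p) * Real.log p
        ≤ ∑ p ∈ (Finset.range M).filter Nat.Prime, (L - p) * Real.log p := by
          apply Finset.sum_le_sum
          intro p hp
          have hp' := hPfacts p (hsub hp)
          apply mul_le_mul_of_nonneg_right (by linarith) hp'.2.2.1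
      _ ≤ ∑ p ∈ P, (L - p) * Real.log p := by
          apply Finset.sum_le_sum_of_subset_of_nonneg hsub
          intro p hp _
          have hp' := hPfacts p hp
          have := hp'.2.1
          apply mul_nonneg (by linarith) hp'.2.2.1
  have step2 := sum_theta_lower M (by omega)
  have hM1L : L - 1 ≤ (M:ℝ) := by linarith
  have hErrM : Err M ≤ Err L := Err_mono_real (by exact_mod_cast hM2.trans' (by norm_num)) hML
  have hErrM0 : 0 ≤ Err (M:ℝ) := Err_nonneg (by exact_mod_cast hM2.trans' (by norm_num))
  have step3 : A0 * ((L-1) * (L-2) / 2) - L * Err L ≤ ∑ p ∈ P, (L - p) * Real.log p := by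
    have hA00 : (0:ℝ) ≤ A0 := by linarith [A0_ge]
    have hL2' : (0:ℝ) ≤ L - 2 := by
      have h : (2:ℝ) ≤ (10:ℝ)^20 := by norm_num
      linarith only [h, hL20]
    have h1 : (L-1) * (L-2) ≤ (M:ℝ) * ((M:ℝ) - 1) :=
      mul_le_mul hM1L (by linarith only [hM1L]) hL2' (Nat.cast_nonneg M)
    have h2 : (M:ℝ) * Err M ≤ L * Err L :=
      mul_le_mul hML hErrM hErrM0 hLpos.le
    have h1' : A0 * ((L-1) * (L-2) / 2) ≤ A0 * ((M:ℝ) * ((M:ℝ)-1) / 2) :=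
      mul_le_mul_of_nonneg_left (by linarith) hA00
    calc A0 * ((L-1) * (L-2) / 2) - L * Err L
        ≤ A0 * ((M:ℝ) * ((M:ℝ)-1) / 2) - (M:ℝ) * Err M := by linarith
      _ ≤ ∑ n ∈ Finset.range M, theta n := step2
      _ ≤ ∑ p ∈ P, (L - p) * Real.log p := step1
  -- Step 4: convert to weights
  have step4 : ∑ p ∈ P, (L - p) * Real.log p = L * ∑ p ∈ P, (1 - p/L) * Real.log p := by
    rw [Finset.mul_sum]
    refine Finset.sum_congr rfl fun p _ => ?_
    field_simp
  set SW : ℝ := ∑ p ∈ P, (1 - (p:ℝ)/L) * Real.log p with hSWdef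
  have hSW : A0 * (L-3) / 2 - Err L ≤ SW := by
    have h1 : A0 * ((L-1) * (L-2) / 2) - L * Err L ≤ L * SW := by
      rw [← step4]; exact step3
    have hA00 : (0:ℝ) ≤ A0 := by linarith [A0_ge]
    have h2 : L * (A0 * (L-3) / 2 - Err L) ≤ A0 * ((L-1) * (L-2) / 2) - L * Err L := by
      have q1 : L*(L-3)/2 ≤ (L-1)*(L-2)/2 := by nlinarith only []
      have q2 : A0 * (L*(L-3)/2) ≤ A0 * ((L-1)*(L-2)/2) :=
        mul_le_mul_of_nonneg_left q1 hA00
      have q3 : L * (A0 * (L-3) / 2 - Err L) = A0 * (L*(L-3)/2) - L * Err L := by ring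
      linarith only [q2, q3]
    exact le_of_mul_le_mul_left (h2.trans h1) hLpos
  -- Step 5: remove the prime 2
  have hFeq : F = P.filter (fun ℓ => Odd ℓ) := by
    rw [hFdef, hPdef, Finset.filter_filter]
    apply Finset.filter_congr
    intro ℓ hℓ
    rw [Finset.mem_range] at hℓ
    have hℓL : (ℓ:ℝ) ≤ L := by
      have : (ℓ:ℝ) ≤ (M:ℝ) := by exact_mod_cast Nat.lt_succ_iff.1 hℓ
      linarith
    simp [hℓL]
  have heven : P.filter (fun ℓ => ¬ Odd ℓ) = {2} := by
    ext ℓ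
    simp only [Finset.mem_filter, Finset.mem_singleton, hPdef, Finset.mem_range]
    constructor
    · rintro ⟨⟨h1, h2⟩, h3⟩
      have he : Even ℓ := Nat.not_odd_iff_even.1 h3
      exact (Nat.Prime.even_iff h2).1 he
    · rintro rfl
      exact ⟨⟨by omega, Nat.prime_two⟩, by decide⟩
  have step5 : SW - Real.log 2 ≤ ∑ ℓ ∈ F, (1 - (ℓ:ℝ)/L) * Real.log ℓ := by
    have hsplit := Finset.sum_filter_add_sum_filter_not P (fun ℓ => Odd ℓ)
      (fun ℓ => (1 - (ℓ:ℝ)/L) * Real.log ℓ)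
    rw [heven] at hsplit
    have h2sum : ∑ ℓ ∈ ({2} : Finset ℕ), (1 - (ℓ:ℝ)/L) * Real.log ℓ ≤ Real.log 2 := by
      rw [Finset.sum_singleton]
      have h2L : (2:ℝ)/L ≤ 1 := by
        rw [div_le_one hLpos]
        have h : (2:ℝ) ≤ (10:ℝ)^20 := by norm_num
        linarith only [h, hL20]
      have hl20 : (0:ℝ) ≤ Real.log 2 := by linarith only [hl2]
      have hq0 : (0:ℝ) ≤ (2:ℝ)/L := div_nonneg (by norm_num) hLpos.le
      push_cast
      calc (1 - 2/L) * Real.log 2 ≤ 1 * Real.log 2 :=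
            mul_le_mul_of_nonneg_right (by linarith only [hq0]) hl20
        _ = Real.log 2 := one_mul _
    rw [hFeq]
    linarith only [hsplit, h2sum, hSW]
  -- Step 6: jacobi split
  set w : ℕ → ℝ := fun ℓ => (1 - (ℓ:ℝ)/L) * Real.log ℓ with hwdef
  have hwF : ∀ ℓ ∈ F, 0 ≤ w ℓ ∧ w ℓ ≤ Real.log L := by
    intro ℓ hℓ
    rw [hFdef, Finset.mem_filter] at hℓ
    obtain ⟨hrange, hprime, hodd, hℓL⟩ := hℓ
    have hlog0 : 0 ≤ Real.log ℓ := Real.log_nonneg (by exact_mod_cast hprime.one_lt.le)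
    have hlogle : Real.log ℓ ≤ Real.log L := Real.log_le_log (by exact_mod_cast hprime.pos) hℓL
    have hq : 0 ≤ (ℓ:ℝ)/L := by positivity
    have hq1 : (ℓ:ℝ)/L ≤ 1 := by rw [div_le_one hLpos]; exact hℓL
    constructor
    · apply mul_nonneg (by linarith only [hq1]) hlog0
    · calc (1 - (ℓ:ℝ)/L) * Real.log ℓ ≤ 1 * Real.log ℓ :=
            mul_le_mul_of_nonneg_right (by linarith only [hq]) hlog0
        _ = Real.log ℓ := one_mul _
        _ ≤ Real.log L := hlogle
  set F1 : Finset ℕ := F.filter (fun ℓ => jacobiSym (D:ℤ) ℓ = 1) with hF1def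
  set F2 : Finset ℕ := (F.filter (fun ℓ => ¬ jacobiSym (D:ℤ) ℓ = 1)).filter
      (fun ℓ => jacobiSym (D:ℤ) ℓ = -1) with hF2def
  set F0 : Finset ℕ := (F.filter (fun ℓ => ¬ jacobiSym (D:ℤ) ℓ = 1)).filter
      (fun ℓ => ¬ jacobiSym (D:ℤ) ℓ = -1) with hF0def
  have hjsplit : ∀ g : ℕ → ℝ, ∑ ℓ ∈ F, g ℓ = ∑ ℓ ∈ F1, g ℓ + ∑ ℓ ∈ F2, g ℓ + ∑ ℓ ∈ F0, g ℓ := by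
    intro g
    rw [← Finset.sum_filter_add_sum_filter_not F (fun ℓ => jacobiSym (D:ℤ) ℓ = 1) g,
      ← Finset.sum_filter_add_sum_filter_not (F.filter (fun ℓ => ¬ jacobiSym (D:ℤ) ℓ = 1))
        (fun ℓ => jacobiSym (D:ℤ) ℓ = -1) g]
    ring
  have hF0zero : ∀ ℓ ∈ F0, jacobiSym (D:ℤ) ℓ = 0 := by
    intro ℓ hℓ
    rw [hF0def, Finset.mem_filter, Finset.mem_filter] at hℓ
    rcases jacobiSym.trichotomy (D:ℤ) ℓ with h | h | h
    · exact h
    · exact absurd h hℓ.1.2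
    · exact absurd h hℓ.2
  -- the hypothesis sum equals Σ w * j
  have hhypsum : ∑ ℓ ∈ F, (1 - (ℓ:ℝ)/L) * ((jacobiSym (D:ℤ) ℓ : ℤ) : ℝ) * Real.log ℓ
      = ∑ ℓ ∈ F1, w ℓ - ∑ ℓ ∈ F2, w ℓ := by
    have h1 : ∀ ℓ : ℕ, (1 - (ℓ:ℝ)/L) * ((jacobiSym (D:ℤ) ℓ : ℤ) : ℝ) * Real.log ℓ
        = w ℓ * ((jacobiSym (D:ℤ) ℓ : ℤ) : ℝ) := fun ℓ => by rw [hwdef]; ring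
    rw [Finset.sum_congr rfl (fun ℓ _ => h1 ℓ)]
    rw [hjsplit (fun ℓ => w ℓ * ((jacobiSym (D:ℤ) ℓ : ℤ) : ℝ))]
    have e1 : ∑ ℓ ∈ F1, w ℓ * ((jacobiSym (D:ℤ) ℓ : ℤ) : ℝ) = ∑ ℓ ∈ F1, w ℓ := by
      apply Finset.sum_congr rfl
      intro ℓ hℓ
      rw [hF1def, Finset.mem_filter] at hℓ
      rw [hℓ.2]
      norm_num
    have e2 : ∑ ℓ ∈ F2, w ℓ * ((jacobiSym (D:ℤ) ℓ : ℤ) : ℝ) = - ∑ ℓ ∈ F2, w ℓ := by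
      rw [← Finset.sum_neg_distrib]
      apply Finset.sum_congr rfl
      intro ℓ hℓ
      rw [hF2def, Finset.mem_filter] at hℓ
      rw [hℓ.2]
      push_cast
      ring
    have e0 : ∑ ℓ ∈ F0, w ℓ * ((jacobiSym (D:ℤ) ℓ : ℤ) : ℝ) = 0 := by
      apply Finset.sum_eq_zero
      intro ℓ hℓ
      rw [hF0zero ℓ hℓ]
      norm_num
    rw [e1, e2, e0]
    ring
  -- F0 sum ≤ log D
  have hDpos : 0 < D := by omega
  have hF0sub : F0 ⊆ D.primeFactors := by
    intro ℓ hℓ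
    have hj0 := hF0zero ℓ hℓ
    rw [hF0def, Finset.mem_filter, Finset.mem_filter, hFdef, Finset.mem_filter] at hℓ
    obtain ⟨⟨⟨-, hprime, -, -⟩, -⟩, -⟩ := hℓ
    rw [jacobiSym.eq_zero_iff] at hj0
    have hgcd : Int.gcd (D:ℤ) (ℓ:ℕ) ≠ 1 := hj0.2
    have hg : Nat.gcd D ℓ ≠ 1 := by
      rwa [Int.gcd_natCast_natCast] at hgcd
    have hdvd : ℓ ∣ D := by
      have h1 : Nat.gcd D ℓ ∣ ℓ := Nat.gcd_dvd_right D ℓ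
      rcases (Nat.Prime.eq_one_or_self_of_dvd hprime _ h1) with h | h
      · exact absurd h hg
      · rw [← h]; exact Nat.gcd_dvd_left D ℓ
    exact Nat.mem_primeFactors.2 ⟨hprime, hdvd, by omega⟩
  have hF0le : ∑ ℓ ∈ F0, w ℓ ≤ Real.log D := by
    have h1 : ∑ ℓ ∈ F0, w ℓ ≤ ∑ ℓ ∈ F0, Real.log ℓ := by
      apply Finset.sum_le_sum
      intro ℓ hℓ
      have hℓF : ℓ ∈ F := by
        rw [hF0def, Finset.mem_filter, Finset.mem_filter] at hℓ
        exact hℓ.1.1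
      rw [hFdef, Finset.mem_filter] at hℓF
      obtain ⟨-, hprime, -, hℓL⟩ := hℓF
      have hlog0 : 0 ≤ Real.log ℓ := Real.log_nonneg (by exact_mod_cast hprime.one_lt.le)
      have hq : 0 ≤ (ℓ:ℝ)/L := by positivity
      rw [hwdef]
      calc (1 - (ℓ:ℝ)/L) * Real.log ℓ ≤ 1 * Real.log ℓ :=
            mul_le_mul_of_nonneg_right (by linarith only [hq]) hlog0
        _ = Real.log ℓ := one_mul _
    have h2 : ∑ ℓ ∈ F0, Real.log ℓ ≤ ∑ ℓ ∈ D.primeFactors, Real.log ℓ := by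
      apply Finset.sum_le_sum_of_subset_of_nonneg hF0sub
      intro p hp _
      exact Real.log_nonneg (by exact_mod_cast (Nat.prime_of_mem_primeFactors hp).one_lt.le)
    have h3 : ∑ ℓ ∈ D.primeFactors, Real.log ℓ ≤ Real.log D := by
      rw [← Real.log_prod (fun p hp =>
        by exact_mod_cast (Nat.prime_of_mem_primeFactors hp).pos.ne')]
      apply Real.log_le_log
      · have hpos : 0 < ∏ p ∈ D.primeFactors, p :=
          Nat.pos_of_dvd_of_pos (Nat.prod_primeFactors_dvd D) hDpos
        rw [← Nat.cast_prod]
        exact_mod_cast hpos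
      · rw [← Nat.cast_prod]
        exact_mod_cast Nat.le_of_dvd hDpos (Nat.prod_primeFactors_dvd D)
    linarith only [h1, h2, h3]
  -- nonnegativity of partial sums
  have hsub1 : F1 ⊆ F := Finset.filter_subset _ _
  have hsub2 : F2 ⊆ F := (Finset.filter_subset _ _).trans (Finset.filter_subset _ _)
  have hS2nonneg : 0 ≤ ∑ ℓ ∈ F2, w ℓ :=
    Finset.sum_nonneg fun ℓ hℓ => (hwF ℓ (hsub2 hℓ)).1
  -- main inequality: 2 * Σ_{F1} w ≥ Σ_F w - log D - A √L log D
  have habs := abs_le.1 hyp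
  rw [hhypsum] at habs
  have hFsum := hjsplit w
  have hwsum : ∑ ℓ ∈ F, w ℓ = ∑ ℓ ∈ F, (1 - (ℓ:ℝ)/L) * Real.log ℓ := rfl
  have hmain : ∑ ℓ ∈ F, w ℓ - Real.log D - A * Real.sqrt L * Real.log D
      ≤ 2 * ∑ ℓ ∈ F1, w ℓ := by
    linarith only [habs.1, hF0le, hFsum]
  -- card bound
  have hcard : ∑ ℓ ∈ F1, w ℓ ≤ (F1.card : ℝ) * Real.log L := by
    calc ∑ ℓ ∈ F1, w ℓ ≤ ∑ _ℓ ∈ F1, Real.log L :=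
          Finset.sum_le_sum fun ℓ hℓ => (hwF ℓ (hsub1 hℓ)).2
      _ = (F1.card : ℝ) * Real.log L := by rw [Finset.sum_const, nsmul_eq_mul]
  -- the set is the coe of F1
  have hset : {ℓ : ℕ | ℓ.Prime ∧ Odd ℓ ∧ (ℓ : ℝ) ≤ L ∧ jacobiSym (D : ℤ) ℓ = 1} = ↑F1 := by
    ext ℓ
    simp only [Set.mem_setOf_eq, Finset.coe_filter, hF1def, hFdef, Finset.mem_filter,
      Finset.mem_range, Set.mem_setOf_eq]
    constructor
    · rintro ⟨h1, h2, h3, h4⟩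
      refine ⟨⟨?_, h1, h2, h3⟩, h4⟩
      have : ℓ ≤ M := by rw [hMdef]; exact Nat.le_floor h3
      omega
    · rintro ⟨⟨-, h1, h2, h3⟩, h4⟩
      exact ⟨h1, h2, h3, h4⟩
  have hncard : ({ℓ : ℕ | ℓ.Prime ∧ Odd ℓ ∧ (ℓ : ℝ) ≤ L ∧ jacobiSym (D : ℤ) ℓ = 1}.ncard : ℝ)
      = (F1.card : ℝ) := by
    rw [hset, Set.ncard_coe_finset]
  -- numeric endgame
  have hsqrtC : 200*(A+1) ≤ Real.sqrt C := by
    rw [hCdef]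
    calc 200*(A+1) = Real.sqrt ((200*(A+1))^2) := (Real.sqrt_sq (by positivity)).symm
      _ ≤ Real.sqrt ((200*(A+1))^2 + 10^31) :=
          Real.sqrt_le_sqrt (le_add_of_nonneg_right (by positivity))
  have hsqrtCpos : 0 < Real.sqrt C := Real.sqrt_pos.2 hCpos
  have hlogDle : Real.log D ≤ Real.sqrt L / Real.sqrt C := by
    have h1 : (Real.log D)^2 ≤ L / C := by
      rw [le_div_iff₀ hCpos]
      calc (Real.log D)^2 * C = C * (Real.log D)^2 := by ring
        _ ≤ L := hL
    calc Real.log D = Real.sqrt ((Real.log D)^2) := (Real.sqrt_sq hlogD0.le).symm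
      _ ≤ Real.sqrt (L / C) := Real.sqrt_le_sqrt h1
      _ = Real.sqrt L / Real.sqrt C := Real.sqrt_div hLpos.le C
  have hsqL : Real.sqrt L * Real.sqrt L = L := Real.mul_self_sqrt hLpos.le
  have hsqrtLpos : 0 < Real.sqrt L := Real.sqrt_pos.2 hLpos
  have hALD : A * Real.sqrt L * Real.log D ≤ L / 200 := by
    have h1 : A * Real.sqrt L * Real.log D ≤ A * Real.sqrt L * (Real.sqrt L / Real.sqrt C) := by
      apply mul_le_mul_of_nonneg_left hlogDle (by positivity)
    have h2 : A * Real.sqrt L * (Real.sqrt L / Real.sqrt C) = A * L / Real.sqrt C := by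
      rw [div_eq_mul_inv, div_eq_mul_inv,
        show A * Real.sqrt L * (Real.sqrt L * (Real.sqrt C)⁻¹)
          = A * (Real.sqrt L * Real.sqrt L) * (Real.sqrt C)⁻¹ from by ring, hsqL]
    have h3 : A * L / Real.sqrt C ≤ A * L / (200*(A+1)) := by
      apply div_le_div_of_nonneg_left (by positivity) (by positivity) hsqrtC
    have h4 : A * L / (200*(A+1)) ≤ L / 200 := by
      rw [div_le_div_iff₀ (by positivity) (by norm_num)]
      have hq : A*L*200 + 200*L = L*(200*(A+1)) := by ring
      have h200 : (0:ℝ) ≤ 200*L := by positivity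
      linarith only [hq, h200]
    linarith only [h1, h2, h3, h4]
  have hlogDsmall : Real.log D ≤ Real.sqrt L := by
    calc Real.log D ≤ Real.sqrt L / Real.sqrt C := hlogDle
      _ ≤ Real.sqrt L / 1 := by
          apply div_le_div_of_nonneg_left hsqrtLpos.le (by norm_num) (by
            have hq : (1:ℝ) ≤ 200*(A+1) := by linarith only [hA.le]
            linarith only [hq, hsqrtC])
      _ = Real.sqrt L := by norm_num
  have hErrL : Err L ≤ 258 * L^((3:ℝ)/4) := rpow_helper L hL20
  have h34 : L^((3:ℝ)/4) ≤ L / 10^5 := three_quarter_bound L hL20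
  have hsqrtL34 : Real.sqrt L ≤ L^((3:ℝ)/4) := by
    rw [Real.sqrt_eq_rpow]
    exact Real.rpow_le_rpow_of_exponent_le hL1 (by norm_num)
  -- final chain
  have hfinal : L / 5 ≤ (F1.card : ℝ) * Real.log L := by
    have hlog2le1 : Real.log 2 ≤ 1 := by linarith only [Real.log_two_lt_d9]
    have hA0ge := A0_ge
    have hA0le := A0_le
    -- Σ_F w ≥ A0(L-3)/2 - Err L - log 2
    have hFlow : A0 * (L-3) / 2 - Err L - Real.log 2 ≤ ∑ ℓ ∈ F, w ℓ := by
      rw [hwsum]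
      linarith only [step5, hSW]
    -- numeric: A0(L-3)/2 - Err L - log2 - log D - A√L logD ≥ 2L/5
    have hnum : 2 * (L/5) ≤ A0 * (L-3) / 2 - Err L - Real.log 2 - Real.log D
        - A * Real.sqrt L * Real.log D := by
      have e1 : Err L ≤ 258 * (L / 10^5) := by
        have hq := mul_le_mul_of_nonneg_left h34 (show (0:ℝ) ≤ 258 by norm_num)
        linarith only [hq, hErrL]
      have e2 : Real.log D ≤ L / 10^5 := by
        have h5 : Real.sqrt L ≤ L / 10^5 := hsqrtL34.trans h34
        linarith only [h5, hlogDsmall]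
      have hA0L : 0.87 * L ≤ A0 * L := mul_le_mul_of_nonneg_right hA0ge hLpos.le
      have hA0three : A0 * 3 ≤ 3.3 := by linarith [hA0le]
      have hkey : A0 * (L-3) / 2 = (A0 * L - A0 * 3) / 2 := by ring
      rw [hkey]
      linarith only [hA0L, hA0three, e1, e2, hALD, hlog2le1, hL20]
    linarith only [hmain, hcard, hFlow, hnum]
  rw [hncard]
  rw [div_le_iff₀ (by positivity)]
  calc L = 5 * (L/5) := by ring
    _ ≤ 5 * ((F1.card:ℝ) * Real.log L) := by linarith only [hfinal]
    _ = (F1.card:ℝ) * (5 * Real.log L) := by ring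


end
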